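/- arXiv:2305.15548 — 2 statements merged into one kernel-verified Lean document; each statement's English description precedes it below -/
import Mathlib

section
/- The set of complex numbers z satisfying conj(z)^4 = z^2 - 4z (i.e., the parameter choice a = -4, b = 0) is finite and has exactly 6 elements. -/
private lemma mem_iff' (z : ℂ) : (starRingEnd ℂ z) ^ 4 = z ^ 2 - 4 * z ↔
    (z.re^4 - 6*z.re^2*z.im^2 + z.im^4 - z.re^2 + z.im^2 + 4*z.re = 0 ∧
     4*z.re*z.im^3 - 4*z.re^3*z.im - 2*z.re*z.im + 4*z.im = 0) := by
  rw [Complex.ext_iff]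
  simp only [pow_succ, pow_zero, one_mul, Complex.mul_re, Complex.mul_im, Complex.sub_re,
    Complex.sub_im, Complex.conj_re, Complex.conj_im, Complex.re_ofNat, Complex.im_ofNat]
  constructor <;> rintro ⟨h1, h2⟩
  · exact ⟨by linear_combination h1, by linear_combination h2⟩
  · exact ⟨by linear_combination h1, by linear_combination h2⟩

private noncomputable def pp : ℝ → ℝ := fun x => 16*x^6+8*x^4-32*x^3-3*x^2+8*x-4

private lemma pp_deriv (x : ℝ) :
    HasDerivAt pp (96*x^5+32*x^3-96*x^2-6*x+8) x := by
  have h : HasDerivAt (fun x : ℝ => 16*x^6+8*x^4-32*x^3-3*x^2+8*x-4)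
      (16*(6*x^5)+8*(4*x^3)-32*(3*x^2)-3*(2*x^1)+8*1-0) x := by
    apply HasDerivAt.sub
    apply HasDerivAt.add
    apply HasDerivAt.sub
    apply HasDerivAt.sub
    apply HasDerivAt.add
    · simpa using (hasDerivAt_pow 6 x).const_mul (16:ℝ)
    · simpa using (hasDerivAt_pow 4 x).const_mul (8:ℝ)
    · simpa using (hasDerivAt_pow 3 x).const_mul (32:ℝ)
    · simpa using (hasDerivAt_pow 2 x).const_mul (3:ℝ)
    · simpa using (hasDerivAt_id x).const_mul (8:ℝ)
    · exact hasDerivAt_const x 4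
  unfold pp
  convert h using 1 <;> ring

private lemma pp_anti : StrictAntiOn pp (Set.Icc (-1:ℝ) (-1/3)) := by
  apply strictAntiOn_of_deriv_neg (convex_Icc _ _)
  · exact (Continuous.continuousOn (by unfold pp; fun_prop))
  · intro x hx
    rw [interior_Icc] at hx
    rw [(pp_deriv x).deriv]
    obtain ⟨h1, h2⟩ := hx
    have h3 : x^3 < 0 := by nlinarith [sq_nonneg x]
    have h5 : x^5 < 0 := by nlinarith [sq_nonneg (x^2)]
    have h6 : 0 < 96*x^2+6*x-8 := by
      nlinarith [mul_nonneg (show (0:ℝ) ≤ -x-1/3 by linarith) (show (0:ℝ) ≤ -x by linarith)]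
    linarith

private lemma pp_mono : StrictMonoOn pp (Set.Ici (1:ℝ)) := by
  apply strictMonoOn_of_deriv_pos (convex_Ici _)
  · exact (Continuous.continuousOn (by unfold pp; fun_prop))
  · intro x hx
    rw [interior_Ici] at hx
    rw [(pp_deriv x).deriv]
    have h1 : (1:ℝ) < x := hx
    have h0 : (1:ℝ) < x^3 := one_lt_pow₀ h1 (by norm_num)
    have h2 : 0 < x^2*(x^3-1) := mul_pos (by positivity) (by linarith)
    have h3 : 0 < x*(x^2-1) := by nlinarith
    nlinarith

/-- the equation `conj z ^ 4 = z ^ 2 - 4 z` has exactly 6 complex solutions. -/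
theorem stmt_7 :
    {z : ℂ | (starRingEnd ℂ z) ^ 4 = z ^ 2 - 4 * z}.Finite ∧
      {z : ℂ | (starRingEnd ℂ z) ^ 4 = z ^ 2 - 4 * z}.ncard = 6 := by
  -- the cubic root
  obtain ⟨r, hrIcc, hr⟩ : ∃ r ∈ Set.Icc (-2:ℝ) 0, r^3 - r + 4 = 0 := by
    have hc : ContinuousOn (fun x : ℝ => x^3 - x + 4) (Set.Icc (-2) 0) := by fun_prop
    have := intermediate_value_Icc (by norm_num : (-2:ℝ) ≤ 0) hc
    have h0 : (0:ℝ) ∈ Set.Icc ((fun x : ℝ => x^3 - x + 4) (-2)) ((fun x : ℝ => x^3 - x + 4) 0) := by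
      norm_num
    obtain ⟨r, hr1, hr2⟩ := this h0
    exact ⟨r, hr1, hr2⟩
  have hrlt : r < -1 := by
    by_contra h
    push_neg at h
    nlinarith [sq_nonneg (r+1), sq_nonneg (r-1), sq_nonneg r]
  have cubic_uniq : ∀ s : ℝ, s^3 - s + 4 = 0 → s = r := by
    intro s hs
    have hslt : s < -1 := by
      by_contra h
      push_neg at h
      nlinarith [sq_nonneg (s+1), sq_nonneg (s-1), sq_nonneg s]
    have key : (s-r)*(s^2+s*r+r^2-1) = 0 := by linear_combination hs - hr
    have hpos : 0 < s^2+s*r+r^2-1 := by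
      nlinarith [mul_pos (show (0:ℝ) < -s by linarith) (show (0:ℝ) < -r by linarith)]
    rcases mul_eq_zero.1 key with h | h
    · exact sub_eq_zero.1 h
    · linarith
  -- sextic roots
  obtain ⟨x1, hx1Icc, hx1⟩ : ∃ x ∈ Set.Icc (-1:ℝ) (-1/3), pp x = 0 := by
    have hc : ContinuousOn pp (Set.Icc (-1:ℝ) (-1/3)) := Continuous.continuousOn (by unfold pp; fun_prop)
    have := intermediate_value_Icc' (by norm_num : (-1:ℝ) ≤ -1/3) hc
    have h0 : (0:ℝ) ∈ Set.Icc (pp (-1/3)) (pp (-1)) := by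
      unfold pp; norm_num
    obtain ⟨x, hx1, hx2⟩ := this h0
    exact ⟨x, hx1, hx2⟩
  obtain ⟨x2, hx2Icc, hx2⟩ : ∃ x ∈ Set.Icc (1:ℝ) 2, pp x = 0 := by
    have hc : ContinuousOn pp (Set.Icc (1:ℝ) 2) := Continuous.continuousOn (by unfold pp; fun_prop)
    have := intermediate_value_Icc (by norm_num : (1:ℝ) ≤ 2) hc
    have h0 : (0:ℝ) ∈ Set.Icc (pp 1) (pp 2) := by
      unfold pp; norm_num
    obtain ⟨x, hx1', hx2'⟩ := this h0
    exact ⟨x, hx1', hx2'⟩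
  have ppneg : ∀ x : ℝ, -1/3 ≤ x → x ≤ 1 → pp x < 0 := by
    intro x h1 h2
    unfold pp
    nlinarith [sq_nonneg (x+1/3), sq_nonneg (x-1), sq_nonneg x, sq_nonneg (x^2-1),
      mul_nonneg (show (0:ℝ) ≤ x + 1/3 by linarith) (show (0:ℝ) ≤ 1 - x by linarith),
      sq_nonneg (x^2+x), sq_nonneg (x^2-x), sq_nonneg (x^3-1)]
  have pppos : ∀ x : ℝ, x ≤ -1 → 0 < pp x := by
    intro x h
    unfold pp
    nlinarith [sq_nonneg (x+1), sq_nonneg x, sq_nonneg (x^2-1), sq_nonneg (x^3+1),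
      mul_nonneg (mul_nonneg (show (0:ℝ) ≤ -x-1 by linarith) (show (0:ℝ) ≤ -x-1 by linarith)) (show (0:ℝ) ≤ -x by linarith)]
  have hx1lt : -1 < x1 := by
    rcases lt_or_eq_of_le hx1Icc.1 with h | h
    · exact h
    · exfalso; have := pppos (-1) le_rfl; rw [h] at this; rw [hx1] at this; exact lt_irrefl 0 this
  have hx2gt : 1 < x2 := by
    rcases lt_or_eq_of_le hx2Icc.1 with h | h
    · exact h
    · exfalso; have := ppneg 1 (by norm_num) le_rfl; rw [h] at this; rw [hx2] at this; exact lt_irrefl 0 this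
  have sextic_uniq : ∀ x : ℝ, pp x = 0 → x = x1 ∨ x = x2 := by
    intro x hx
    rcases le_or_gt x (-1) with h | h
    · exact absurd hx (pppos x h).ne'
    rcases le_or_gt x (-1/3) with h2 | h2
    · left
      exact pp_anti.injOn ⟨h.le, h2⟩ hx1Icc (by rw [hx, hx1])
    rcases le_or_gt x 1 with h3 | h3
    · exact absurd hx (ppneg x h2.le h3).ne
    · right
      exact pp_mono.injOn (Set.mem_Ici.2 h3.le) (Set.mem_Ici.2 hx2Icc.1) (by rw [hx, hx2])
  -- the y values
  have hx1neg : x1 < 0 := lt_of_le_of_lt hx1Icc.2 (by norm_num)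
  have ht1 : 0 < (4*x1^3+2*x1-4)/(4*x1) := by
    apply div_pos_of_neg_of_neg
    · nlinarith [mul_pos (mul_pos (neg_pos.2 hx1neg) (neg_pos.2 hx1neg)) (neg_pos.2 hx1neg)]
    · linarith
  have ht2 : 0 < (4*x2^3+2*x2-4)/(4*x2) := by
    apply div_pos
    · nlinarith [mul_pos (mul_pos (show (0:ℝ)<x2 by linarith) (show (0:ℝ)<x2 by linarith)) (show (0:ℝ)<x2 by linarith)]
    · linarith
  set y1 := Real.sqrt ((4*x1^3+2*x1-4)/(4*x1)) with hy1def
  set y2 := Real.sqrt ((4*x2^3+2*x2-4)/(4*x2)) with hy2def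
  have hy1pos : 0 < y1 := Real.sqrt_pos.2 ht1
  have hy2pos : 0 < y2 := Real.sqrt_pos.2 ht2
  have hx1ne : x1 ≠ 0 := ne_of_lt hx1neg
  have hx2ne : x2 ≠ 0 := by positivity
  have hy1sq : y1^2 = (4*x1^3+2*x1-4)/(4*x1) := Real.sq_sqrt ht1.le
  have hy2sq : y2^2 = (4*x2^3+2*x2-4)/(4*x2) := Real.sq_sqrt ht2.le
  have hG1 : 4*x1*y1^2 - 4*x1^3 - 2*x1 + 4 = 0 := by
    rw [hy1sq]; field_simp; ring
  have hG2 : 4*x2*y2^2 - 4*x2^3 - 2*x2 + 4 = 0 := by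
    rw [hy2sq]; field_simp; ring
  have hp1 : 16*x1^6+8*x1^4-32*x1^3-3*x1^2+8*x1-4 = 0 := hx1
  have hp2 : 16*x2^6+8*x2^4-32*x2^3-3*x2^2+8*x2-4 = 0 := hx2
  have hF1 : x1^4 - 6*x1^2*y1^2 + y1^4 - x1^2 + y1^2 + 4*x1 = 0 := by
    have h16 : (16*x1^2) * (x1^4 - 6*x1^2*y1^2 + y1^4 - x1^2 + y1^2 + 4*x1) = 0 := by
      linear_combination (4*x1*y1^2-20*x1^3+6*x1-4) * hG1 - 4 * hp1
    rcases mul_eq_zero.1 h16 with h | h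
    · exact absurd h (by positivity)
    · exact h
  have hF2 : x2^4 - 6*x2^2*y2^2 + y2^4 - x2^2 + y2^2 + 4*x2 = 0 := by
    have h16 : (16*x2^2) * (x2^4 - 6*x2^2*y2^2 + y2^4 - x2^2 + y2^2 + 4*x2) = 0 := by
      linear_combination (4*x2*y2^2-20*x2^3+6*x2-4) * hG2 - 4 * hp2
    rcases mul_eq_zero.1 h16 with h | h
    · exact absurd h (by positivity)
    · exact h
  have Seq : {z : ℂ | (starRingEnd ℂ z) ^ 4 = z ^ 2 - 4 * z} =
      {0, (r:ℂ), (x1:ℂ)+y1*Complex.I, (x1:ℂ)-y1*Complex.I,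
        (x2:ℂ)+y2*Complex.I, (x2:ℂ)-y2*Complex.I} := by
    ext z
    rw [Set.mem_setOf_eq, mem_iff']
    simp only [Set.mem_insert_iff, Set.mem_singleton_iff]
    constructor
    · rintro ⟨hF, hE2⟩
      have hE2' : z.im * (4*z.re*z.im^2 - 4*z.re^3 - 2*z.re + 4) = 0 := by linear_combination hE2
      rcases mul_eq_zero.1 hE2' with hy | hG
      · rw [hy] at hF
        have hfac : z.re * (z.re^3 - z.re + 4) = 0 := by linear_combination hF
        rcases mul_eq_zero.1 hfac with h0 | hcr
        · exact Or.inl (Complex.ext (by simpa using h0) (by simpa using hy))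
        · refine Or.inr (Or.inl (Complex.ext ?_ ?_))
          · simpa using cubic_uniq z.re hcr
          · simpa using hy
      · have hxne : z.re ≠ 0 := by
          intro h; rw [h] at hG; norm_num at hG
        have hyne : z.im ≠ 0 := by
          intro h
          rw [h] at hF hG
          have hfac : z.re * (z.re^3 - z.re + 4) = 0 := by linear_combination hF
          rcases mul_eq_zero.1 hfac with h0 | hcr
          · exact hxne h0
          · have hx103 : z.re = 10/3 := by linear_combination (-(1:ℝ)/6) * hG - (2/3) * hcr
            rw [hx103] at hcr; norm_num at hcr
        have hp : pp z.re = 0 := by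
          show 16*z.re^6+8*z.re^4-32*z.re^3-3*z.re^2+8*z.re-4 = 0
          linear_combination (-4*z.re^2) * hF + (z.re*z.im^2 - 5*z.re^3 + (3/2)*z.re - 1) * hG
        rcases sextic_uniq z.re hp with h1 | h1
        · rw [h1] at hG
          have h4 : (4*x1) * z.im^2 = (4*x1) * y1^2 := by linear_combination hG - hG1
          have hsq : z.im^2 = y1^2 := mul_left_cancel₀ (mul_ne_zero four_ne_zero hx1ne) h4
          have hfac : (z.im - y1)*(z.im + y1) = 0 := by linear_combination hsq
          rcases mul_eq_zero.1 hfac with h | h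
          · refine Or.inr (Or.inr (Or.inl (Complex.ext ?_ ?_))) <;>
              simp [h1, sub_eq_zero.1 h]
          · refine Or.inr (Or.inr (Or.inr (Or.inl (Complex.ext ?_ ?_)))) <;>
              simp [h1, eq_neg_of_add_eq_zero_left h]
        · rw [h1] at hG
          have h4 : (4*x2) * z.im^2 = (4*x2) * y2^2 := by linear_combination hG - hG2
          have hsq : z.im^2 = y2^2 := mul_left_cancel₀ (mul_ne_zero four_ne_zero hx2ne) h4
          have hfac : (z.im - y2)*(z.im + y2) = 0 := by linear_combination hsq
          rcases mul_eq_zero.1 hfac with h | h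
          · refine Or.inr (Or.inr (Or.inr (Or.inr (Or.inl (Complex.ext ?_ ?_))))) <;>
              simp [h1, sub_eq_zero.1 h]
          · refine Or.inr (Or.inr (Or.inr (Or.inr (Or.inr (Complex.ext ?_ ?_))))) <;>
              simp [h1, eq_neg_of_add_eq_zero_left h]
    · rintro (rfl | rfl | rfl | rfl | rfl | rfl)
      · norm_num
      · constructor <;> simp
        linear_combination r * hr
      · constructor <;> simp
        · linear_combination hF1
        · linear_combination y1 * hG1
      · constructor <;> simp
        · linear_combination hF1
        · linear_combination (-y1) * hG1
      · constructor <;> simp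
        · linear_combination hF2
        · linear_combination y2 * hG2
      · constructor <;> simp
        · linear_combination hF2
        · linear_combination (-y2) * hG2
  rw [Seq]
  constructor
  · exact Set.toFinite _
  · have hrne : r ≠ 0 := by linarith
    have h1 : ((x2:ℂ)+y2*Complex.I) ∉ ({(x2:ℂ)-y2*Complex.I} : Set ℂ) := by
      simp [Complex.ext_iff]; intro _; linarith
    have h2 : ((x1:ℂ)-y1*Complex.I) ∉ ({(x2:ℂ)+y2*Complex.I, (x2:ℂ)-y2*Complex.I} : Set ℂ) := by
      simp [Complex.ext_iff]
      constructor <;> intro h <;> linarith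
    have h3 : ((x1:ℂ)+y1*Complex.I) ∉
        ({(x1:ℂ)-y1*Complex.I, (x2:ℂ)+y2*Complex.I, (x2:ℂ)-y2*Complex.I} : Set ℂ) := by
      simp [Complex.ext_iff]
      refine ⟨fun _ => by linarith, fun h => by linarith, fun h => by linarith⟩
    have h4 : ((r:ℂ)) ∉ ({(x1:ℂ)+y1*Complex.I, (x1:ℂ)-y1*Complex.I,
        (x2:ℂ)+y2*Complex.I, (x2:ℂ)-y2*Complex.I} : Set ℂ) := by
      simp [Complex.ext_iff]
      refine ⟨fun h => by linarith, fun h => by linarith, fun h => by linarith, fun h => by linarith⟩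
    have h5 : (0:ℂ) ∉ ({(r:ℂ), (x1:ℂ)+y1*Complex.I, (x1:ℂ)-y1*Complex.I,
        (x2:ℂ)+y2*Complex.I, (x2:ℂ)-y2*Complex.I} : Set ℂ) := by
      simp [Complex.ext_iff]
      refine ⟨fun h => absurd h.symm hrne, fun h => by linarith, fun h => by linarith,
        fun h => by linarith, fun h => by linarith⟩
    rw [Set.ncard_insert_of_notMem h5, Set.ncard_insert_of_notMem h4,
      Set.ncard_insert_of_notMem h3, Set.ncard_insert_of_notMem h2,
      Set.ncard_insert_of_notMem h1, Set.ncard_singleton]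
end

section
/- For every real a and b, the number of complex solutions z of conj(z)^4 = z^2 + a*z + b, with (a,b) chosen in an unbounded connected component of the complement of the discriminantal curve, is at least 4 and at most 6; concretely, for each of the parameter choices (a,b) ∈ {(4,0), (0,-4), (-4,0), (0,4)}, the solution set of conj(z)^4 = z^2 + a*z + b is finite with cardinality at least 4 and at most 6. -/
lemma real_iff (a b : ℝ) (x y : ℝ) :
    (starRingEnd ℂ ((x:ℂ) + (y:ℂ)*Complex.I)) ^ 4 = ((x:ℂ) + (y:ℂ)*Complex.I) ^ 2
      + (a : ℂ) * ((x:ℂ) + (y:ℂ)*Complex.I) + (b : ℂ) ↔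
    (x^4 - 6*x^2*y^2 + y^4 = x^2 - y^2 + a*x + b ∧
     4*x*y*(y^2 - x^2) = 2*x*y + a*y) := by
  rw [Complex.ext_iff]
  simp only [pow_succ, pow_zero, one_mul, Complex.mul_re, Complex.mul_im, Complex.add_re,
    Complex.add_im, Complex.conj_re, Complex.conj_im, Complex.ofReal_re, Complex.ofReal_im,
    Complex.I_re, Complex.I_im, map_add, Complex.conj_ofReal, map_mul, Complex.conj_I,
    Complex.neg_re, Complex.neg_im]
  constructor <;> rintro ⟨h1, h2⟩ <;> constructor <;> nlinarith [h1, h2]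

lemma cmk_inj (x y x' y' : ℝ) :
    ((x:ℂ) + (y:ℂ)*Complex.I = (x':ℂ) + (y':ℂ)*Complex.I) ↔ (x = x' ∧ y = y') := by
  constructor
  · intro h
    have h1 := congrArg Complex.re h
    have h2 := congrArg Complex.im h
    simp at h1 h2
    exact ⟨h1, h2⟩
  · rintro ⟨rfl, rfl⟩; rfl

lemma cmk_surj (z : ℂ) : ∃ x y : ℝ, z = (x:ℂ) + (y:ℂ)*Complex.I :=
  ⟨z.re, z.im, (Complex.re_add_im z).symm⟩

lemma ncard_four (x1 x2 x3 x4 : ℂ) (h12 : x1 ≠ x2) (h13 : x1 ≠ x3) (h14 : x1 ≠ x4)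
    (h23 : x2 ≠ x3) (h24 : x2 ≠ x4) (h34 : x3 ≠ x4) :
    ({x1, x2, x3, x4} : Set ℂ).ncard = 4 := by
  rw [show ({x1,x2,x3,x4} : Set ℂ) = (({x1,x2,x3,x4} : Finset ℂ) : Set ℂ) by simp,
    Set.ncard_coe_finset]
  rw [Finset.card_insert_of_notMem (by simp [h12, h13, h14]),
    Finset.card_insert_of_notMem (by simp [h23, h24]),
    Finset.card_insert_of_notMem (by simp [h34]), Finset.card_singleton]

lemma ncard_six_le (x1 x2 x3 x4 x5 x6 : ℂ) :
    ({x1, x2, x3, x4, x5, x6} : Set ℂ).ncard ≤ 6 :=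
  le_trans (Set.ncard_insert_le _ _) (by
    have h2 := Set.ncard_insert_le x2 ({x3, x4, x5, x6} : Set ℂ)
    have h3 := Set.ncard_insert_le x3 ({x4, x5, x6} : Set ℂ)
    have h4 := Set.ncard_insert_le x4 ({x5, x6} : Set ℂ)
    have h5 := Set.ncard_insert_le x5 ({x6} : Set ℂ)
    have h6 : ({x6} : Set ℂ).ncard = 1 := Set.ncard_singleton _
    omega)

lemma sq_eq_of (u v : ℝ) (h : u^2 = v^2) (hv : 0 ≤ v) : u = v ∨ u = -v := by
  rcases mul_eq_zero.1 (show (u - v)*(u + v) = 0 by linear_combination h) with h' | h'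
  · exact Or.inl (by linarith)
  · exact Or.inr (by linarith)

-- sign facts for Q x = 16x^6+8x^4+32x^3-3x^2-8x-4
lemma Qpos_left (x : ℝ) (h : x ≤ -6/5) : 0 < 16*x^6+8*x^4+32*x^3-3*x^2-8*x-4 := by
  nlinarith [sq_nonneg (x+6/5), sq_nonneg (x^2+x), sq_nonneg x, sq_nonneg (x^3+1),
    sq_nonneg (x^2-6/5*x), sq_nonneg (x^3 - x)]

lemma Qneg_mid (x : ℝ) (h1 : -11/10 ≤ x) (h2 : x ≤ 3/5) :
    16*x^6+8*x^4+32*x^3-3*x^2-8*x-4 < 0 := by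
  linarith [mul_nonneg (pow_nonneg (sub_nonneg.2 h1) 0) (pow_nonneg (sub_nonneg.2 h2) 11),
      mul_nonneg (pow_nonneg (sub_nonneg.2 h1) 1) (pow_nonneg (sub_nonneg.2 h2) 10),
      mul_nonneg (pow_nonneg (sub_nonneg.2 h1) 2) (pow_nonneg (sub_nonneg.2 h2) 9),
      mul_nonneg (pow_nonneg (sub_nonneg.2 h1) 3) (pow_nonneg (sub_nonneg.2 h2) 8),
      mul_nonneg (pow_nonneg (sub_nonneg.2 h1) 4) (pow_nonneg (sub_nonneg.2 h2) 7),
      mul_nonneg (pow_nonneg (sub_nonneg.2 h1) 5) (pow_nonneg (sub_nonneg.2 h2) 6),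
      mul_nonneg (pow_nonneg (sub_nonneg.2 h1) 6) (pow_nonneg (sub_nonneg.2 h2) 5),
      mul_nonneg (pow_nonneg (sub_nonneg.2 h1) 7) (pow_nonneg (sub_nonneg.2 h2) 4),
      mul_nonneg (pow_nonneg (sub_nonneg.2 h1) 8) (pow_nonneg (sub_nonneg.2 h2) 3),
      mul_nonneg (pow_nonneg (sub_nonneg.2 h1) 9) (pow_nonneg (sub_nonneg.2 h2) 2),
      mul_nonneg (pow_nonneg (sub_nonneg.2 h1) 10) (pow_nonneg (sub_nonneg.2 h2) 1),
      mul_nonneg (pow_nonneg (sub_nonneg.2 h1) 11) (pow_nonneg (sub_nonneg.2 h2) 0)]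

lemma Qpos_right (x : ℝ) (h : 7/10 ≤ x) : 0 < 16*x^6+8*x^4+32*x^3-3*x^2-8*x-4 := by
  nlinarith [sq_nonneg (x-7/10), sq_nonneg x, sq_nonneg (x^2-1), sq_nonneg (x^3-1)]

lemma Cpos_beta (x y : ℝ) (hx : 3/5 ≤ x) (hx7 : x ≤ 7/10) (hy : 3/5 ≤ y) (hy7 : y ≤ 7/10) :
    0 < 16*(x^5+x^4*y+x^3*y^2+x^2*y^3+x*y^4+y^5) + 8*(x^3+x^2*y+x*y^2+y^3)
      + 32*(x^2+x*y+y^2) - 3*(x+y) - 8 := by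
  linarith [mul_nonneg (pow_nonneg (sub_nonneg.2 hx) 0) (pow_nonneg (sub_nonneg.2 hy) 1),
      mul_nonneg (pow_nonneg (sub_nonneg.2 hx) 0) (pow_nonneg (sub_nonneg.2 hy) 2),
      mul_nonneg (pow_nonneg (sub_nonneg.2 hx) 0) (pow_nonneg (sub_nonneg.2 hy) 3),
      mul_nonneg (pow_nonneg (sub_nonneg.2 hx) 0) (pow_nonneg (sub_nonneg.2 hy) 4),
      mul_nonneg (pow_nonneg (sub_nonneg.2 hx) 0) (pow_nonneg (sub_nonneg.2 hy) 5),
      mul_nonneg (pow_nonneg (sub_nonneg.2 hx) 1) (pow_nonneg (sub_nonneg.2 hy) 0),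
      mul_nonneg (pow_nonneg (sub_nonneg.2 hx) 1) (pow_nonneg (sub_nonneg.2 hy) 1),
      mul_nonneg (pow_nonneg (sub_nonneg.2 hx) 1) (pow_nonneg (sub_nonneg.2 hy) 2),
      mul_nonneg (pow_nonneg (sub_nonneg.2 hx) 1) (pow_nonneg (sub_nonneg.2 hy) 3),
      mul_nonneg (pow_nonneg (sub_nonneg.2 hx) 1) (pow_nonneg (sub_nonneg.2 hy) 4),
      mul_nonneg (pow_nonneg (sub_nonneg.2 hx) 2) (pow_nonneg (sub_nonneg.2 hy) 0),
      mul_nonneg (pow_nonneg (sub_nonneg.2 hx) 2) (pow_nonneg (sub_nonneg.2 hy) 1),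
      mul_nonneg (pow_nonneg (sub_nonneg.2 hx) 2) (pow_nonneg (sub_nonneg.2 hy) 2),
      mul_nonneg (pow_nonneg (sub_nonneg.2 hx) 2) (pow_nonneg (sub_nonneg.2 hy) 3),
      mul_nonneg (pow_nonneg (sub_nonneg.2 hx) 3) (pow_nonneg (sub_nonneg.2 hy) 0),
      mul_nonneg (pow_nonneg (sub_nonneg.2 hx) 3) (pow_nonneg (sub_nonneg.2 hy) 1),
      mul_nonneg (pow_nonneg (sub_nonneg.2 hx) 3) (pow_nonneg (sub_nonneg.2 hy) 2),
      mul_nonneg (pow_nonneg (sub_nonneg.2 hx) 4) (pow_nonneg (sub_nonneg.2 hy) 0),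
      mul_nonneg (pow_nonneg (sub_nonneg.2 hx) 4) (pow_nonneg (sub_nonneg.2 hy) 1),
      mul_nonneg (pow_nonneg (sub_nonneg.2 hx) 5) (pow_nonneg (sub_nonneg.2 hy) 0)]

lemma Cneg_alpha (x y : ℝ) (hx : -6/5 ≤ x) (hx7 : x ≤ -11/10) (hy : -6/5 ≤ y)
    (hy7 : y ≤ -11/10) :
    16*(x^5+x^4*y+x^3*y^2+x^2*y^3+x*y^4+y^5) + 8*(x^3+x^2*y+x*y^2+y^3)
      + 32*(x^2+x*y+y^2) - 3*(x+y) - 8 < 0 := by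
  linarith [mul_nonneg (pow_nonneg (sub_nonneg.2 hx) 0) (pow_nonneg (sub_nonneg.2 hy) 1),
      mul_nonneg (pow_nonneg (sub_nonneg.2 hx) 0) (pow_nonneg (sub_nonneg.2 hy) 2),
      mul_nonneg (pow_nonneg (sub_nonneg.2 hx) 0) (pow_nonneg (sub_nonneg.2 hy) 3),
      mul_nonneg (pow_nonneg (sub_nonneg.2 hx) 0) (pow_nonneg (sub_nonneg.2 hy) 4),
      mul_nonneg (pow_nonneg (sub_nonneg.2 hx) 0) (pow_nonneg (sub_nonneg.2 hy) 5),
      mul_nonneg (pow_nonneg (sub_nonneg.2 hx) 1) (pow_nonneg (sub_nonneg.2 hy) 0),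
      mul_nonneg (pow_nonneg (sub_nonneg.2 hx) 1) (pow_nonneg (sub_nonneg.2 hy) 1),
      mul_nonneg (pow_nonneg (sub_nonneg.2 hx) 1) (pow_nonneg (sub_nonneg.2 hy) 2),
      mul_nonneg (pow_nonneg (sub_nonneg.2 hx) 1) (pow_nonneg (sub_nonneg.2 hy) 3),
      mul_nonneg (pow_nonneg (sub_nonneg.2 hx) 1) (pow_nonneg (sub_nonneg.2 hy) 4),
      mul_nonneg (pow_nonneg (sub_nonneg.2 hx) 2) (pow_nonneg (sub_nonneg.2 hy) 0),
      mul_nonneg (pow_nonneg (sub_nonneg.2 hx) 2) (pow_nonneg (sub_nonneg.2 hy) 1),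
      mul_nonneg (pow_nonneg (sub_nonneg.2 hx) 2) (pow_nonneg (sub_nonneg.2 hy) 2),
      mul_nonneg (pow_nonneg (sub_nonneg.2 hx) 2) (pow_nonneg (sub_nonneg.2 hy) 3),
      mul_nonneg (pow_nonneg (sub_nonneg.2 hx) 3) (pow_nonneg (sub_nonneg.2 hy) 0),
      mul_nonneg (pow_nonneg (sub_nonneg.2 hx) 3) (pow_nonneg (sub_nonneg.2 hy) 1),
      mul_nonneg (pow_nonneg (sub_nonneg.2 hx) 3) (pow_nonneg (sub_nonneg.2 hy) 2),
      mul_nonneg (pow_nonneg (sub_nonneg.2 hx) 4) (pow_nonneg (sub_nonneg.2 hy) 0),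
      mul_nonneg (pow_nonneg (sub_nonneg.2 hx) 4) (pow_nonneg (sub_nonneg.2 hy) 1),
      mul_nonneg (pow_nonneg (sub_nonneg.2 hx) 5) (pow_nonneg (sub_nonneg.2 hy) 0),
      mul_nonneg (mul_nonneg (pow_nonneg (sub_nonneg.2 hx) 0) (pow_nonneg (sub_nonneg.2 hy) 0)) (sub_nonneg.2 hx7),
      mul_nonneg (mul_nonneg (pow_nonneg (sub_nonneg.2 hx) 0) (pow_nonneg (sub_nonneg.2 hy) 1)) (sub_nonneg.2 hx7),
      mul_nonneg (mul_nonneg (pow_nonneg (sub_nonneg.2 hx) 0) (pow_nonneg (sub_nonneg.2 hy) 2)) (sub_nonneg.2 hx7),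
      mul_nonneg (mul_nonneg (pow_nonneg (sub_nonneg.2 hx) 0) (pow_nonneg (sub_nonneg.2 hy) 3)) (sub_nonneg.2 hx7),
      mul_nonneg (mul_nonneg (pow_nonneg (sub_nonneg.2 hx) 0) (pow_nonneg (sub_nonneg.2 hy) 4)) (sub_nonneg.2 hx7),
      mul_nonneg (mul_nonneg (pow_nonneg (sub_nonneg.2 hx) 1) (pow_nonneg (sub_nonneg.2 hy) 0)) (sub_nonneg.2 hx7),
      mul_nonneg (mul_nonneg (pow_nonneg (sub_nonneg.2 hx) 1) (pow_nonneg (sub_nonneg.2 hy) 1)) (sub_nonneg.2 hx7),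
      mul_nonneg (mul_nonneg (pow_nonneg (sub_nonneg.2 hx) 1) (pow_nonneg (sub_nonneg.2 hy) 2)) (sub_nonneg.2 hx7),
      mul_nonneg (mul_nonneg (pow_nonneg (sub_nonneg.2 hx) 1) (pow_nonneg (sub_nonneg.2 hy) 3)) (sub_nonneg.2 hx7),
      mul_nonneg (mul_nonneg (pow_nonneg (sub_nonneg.2 hx) 2) (pow_nonneg (sub_nonneg.2 hy) 0)) (sub_nonneg.2 hx7),
      mul_nonneg (mul_nonneg (pow_nonneg (sub_nonneg.2 hx) 2) (pow_nonneg (sub_nonneg.2 hy) 1)) (sub_nonneg.2 hx7),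
      mul_nonneg (mul_nonneg (pow_nonneg (sub_nonneg.2 hx) 2) (pow_nonneg (sub_nonneg.2 hy) 2)) (sub_nonneg.2 hx7),
      mul_nonneg (mul_nonneg (pow_nonneg (sub_nonneg.2 hx) 3) (pow_nonneg (sub_nonneg.2 hy) 0)) (sub_nonneg.2 hx7),
      mul_nonneg (mul_nonneg (pow_nonneg (sub_nonneg.2 hx) 3) (pow_nonneg (sub_nonneg.2 hy) 1)) (sub_nonneg.2 hx7),
      mul_nonneg (mul_nonneg (pow_nonneg (sub_nonneg.2 hx) 4) (pow_nonneg (sub_nonneg.2 hy) 0)) (sub_nonneg.2 hx7),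
      mul_nonneg (mul_nonneg (pow_nonneg (sub_nonneg.2 hx) 0) (pow_nonneg (sub_nonneg.2 hy) 0)) (sub_nonneg.2 hy7),
      mul_nonneg (mul_nonneg (pow_nonneg (sub_nonneg.2 hx) 0) (pow_nonneg (sub_nonneg.2 hy) 1)) (sub_nonneg.2 hy7),
      mul_nonneg (mul_nonneg (pow_nonneg (sub_nonneg.2 hx) 0) (pow_nonneg (sub_nonneg.2 hy) 2)) (sub_nonneg.2 hy7),
      mul_nonneg (mul_nonneg (pow_nonneg (sub_nonneg.2 hx) 0) (pow_nonneg (sub_nonneg.2 hy) 3)) (sub_nonneg.2 hy7),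
      mul_nonneg (mul_nonneg (pow_nonneg (sub_nonneg.2 hx) 0) (pow_nonneg (sub_nonneg.2 hy) 4)) (sub_nonneg.2 hy7),
      mul_nonneg (mul_nonneg (pow_nonneg (sub_nonneg.2 hx) 1) (pow_nonneg (sub_nonneg.2 hy) 0)) (sub_nonneg.2 hy7),
      mul_nonneg (mul_nonneg (pow_nonneg (sub_nonneg.2 hx) 1) (pow_nonneg (sub_nonneg.2 hy) 1)) (sub_nonneg.2 hy7),
      mul_nonneg (mul_nonneg (pow_nonneg (sub_nonneg.2 hx) 1) (pow_nonneg (sub_nonneg.2 hy) 2)) (sub_nonneg.2 hy7),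
      mul_nonneg (mul_nonneg (pow_nonneg (sub_nonneg.2 hx) 1) (pow_nonneg (sub_nonneg.2 hy) 3)) (sub_nonneg.2 hy7),
      mul_nonneg (mul_nonneg (pow_nonneg (sub_nonneg.2 hx) 2) (pow_nonneg (sub_nonneg.2 hy) 0)) (sub_nonneg.2 hy7),
      mul_nonneg (mul_nonneg (pow_nonneg (sub_nonneg.2 hx) 2) (pow_nonneg (sub_nonneg.2 hy) 1)) (sub_nonneg.2 hy7),
      mul_nonneg (mul_nonneg (pow_nonneg (sub_nonneg.2 hx) 2) (pow_nonneg (sub_nonneg.2 hy) 2)) (sub_nonneg.2 hy7),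
      mul_nonneg (mul_nonneg (pow_nonneg (sub_nonneg.2 hx) 3) (pow_nonneg (sub_nonneg.2 hy) 0)) (sub_nonneg.2 hy7),
      mul_nonneg (mul_nonneg (pow_nonneg (sub_nonneg.2 hx) 3) (pow_nonneg (sub_nonneg.2 hy) 1)) (sub_nonneg.2 hy7),
      mul_nonneg (mul_nonneg (pow_nonneg (sub_nonneg.2 hx) 4) (pow_nonneg (sub_nonneg.2 hy) 0)) (sub_nonneg.2 hy7)]

lemma Qcont : Continuous (fun x : ℝ => 16*x^6+8*x^4+32*x^3-3*x^2-8*x-4) := by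
  continuity

set_option maxHeartbeats 2000000 in
lemma case1 :
    {z : ℂ | (starRingEnd ℂ z) ^ 4 = z ^ 2 + ((4:ℝ) : ℂ) * z + ((0:ℝ) : ℂ)}.Finite ∧
    4 ≤ {z : ℂ | (starRingEnd ℂ z) ^ 4 = z ^ 2 + ((4:ℝ) : ℂ) * z + ((0:ℝ) : ℂ)}.ncard ∧
    {z : ℂ | (starRingEnd ℂ z) ^ 4 = z ^ 2 + ((4:ℝ) : ℂ) * z + ((0:ℝ) : ℂ)}.ncard ≤ 6 := by
  -- the real root of x^3 = x + 4
  obtain ⟨r, hrmem, hr3⟩ : ∃ r ∈ Set.Icc (3/2:ℝ) 2, r^3 - r - 4 = 0 := by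
    have hcont : ContinuousOn (fun x : ℝ => x^3 - x - 4) (Set.Icc (3/2:ℝ) 2) := by
      apply Continuous.continuousOn; continuity
    have := intermediate_value_Icc (by norm_num : (3/2:ℝ) ≤ 2) hcont
    have h0 : (0:ℝ) ∈ Set.Icc ((fun x : ℝ => x^3 - x - 4) (3/2)) ((fun x : ℝ => x^3 - x - 4) 2) := by
      constructor <;> norm_num
    obtain ⟨r, hmem, hval⟩ := this h0
    exact ⟨r, hmem, hval⟩
  obtain ⟨hr32, hr2⟩ := hrmem
  -- the root α of Q in [-6/5, -11/10]
  obtain ⟨α, hαmem, hαQ⟩ : ∃ α ∈ Set.Icc (-6/5:ℝ) (-11/10),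
      16*α^6+8*α^4+32*α^3-3*α^2-8*α-4 = 0 := by
    have := intermediate_value_Icc' (by norm_num : (-6/5:ℝ) ≤ -11/10) Qcont.continuousOn
    have h0 : (0:ℝ) ∈ Set.Icc ((fun x : ℝ => 16*x^6+8*x^4+32*x^3-3*x^2-8*x-4) (-11/10))
        ((fun x : ℝ => 16*x^6+8*x^4+32*x^3-3*x^2-8*x-4) (-6/5)) := by
      constructor <;> norm_num
    obtain ⟨α, hmem, hval⟩ := this h0
    exact ⟨α, hmem, hval⟩
  obtain ⟨hα1, hα2⟩ := hαmem
  -- the root β of Q in [3/5, 7/10]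
  obtain ⟨β, hβmem, hβQ⟩ : ∃ β ∈ Set.Icc (3/5:ℝ) (7/10),
      16*β^6+8*β^4+32*β^3-3*β^2-8*β-4 = 0 := by
    have := intermediate_value_Icc (by norm_num : (3/5:ℝ) ≤ 7/10) Qcont.continuousOn
    have h0 : (0:ℝ) ∈ Set.Icc ((fun x : ℝ => 16*x^6+8*x^4+32*x^3-3*x^2-8*x-4) (3/5))
        ((fun x : ℝ => 16*x^6+8*x^4+32*x^3-3*x^2-8*x-4) (7/10)) := by
      constructor <;> norm_num
    obtain ⟨β, hmem, hval⟩ := this h0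
    exact ⟨β, hmem, hval⟩
  obtain ⟨hβ1, hβ2⟩ := hβmem
  have hαneg : α < 0 := by linarith
  have hβpos : 0 < β := by linarith
  -- imaginary parts
  obtain ⟨ya, hya, hyapos⟩ : ∃ ya : ℝ, 2*α*ya^2 = 2*α^3+α+2 ∧ 0 < ya := by
    have hnum : 2*α^3+α+2 < 0 := by nlinarith [sq_nonneg (α+11/10)]
    have h2a : (2:ℝ)*α ≠ 0 := by intro h; rw [show α = 0 by linarith] at hαneg; simp at hαneg
    refine ⟨Real.sqrt ((2*α^3+α+2)/(2*α)), ?_, Real.sqrt_pos.2 (by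
      apply div_pos_of_neg_of_neg hnum; linarith)⟩
    rw [Real.sq_sqrt (le_of_lt (div_pos_of_neg_of_neg hnum (by linarith)))]
    field_simp
    exact mul_div_cancel_left₀ _ (ne_of_lt hαneg)
  obtain ⟨yb, hyb, hybpos⟩ : ∃ yb : ℝ, 2*β*yb^2 = 2*β^3+β+2 ∧ 0 < yb := by
    have hnum : 0 < 2*β^3+β+2 := by nlinarith
    have h2b : (2:ℝ)*β ≠ 0 := by positivity
    refine ⟨Real.sqrt ((2*β^3+β+2)/(2*β)), ?_, Real.sqrt_pos.2 (by positivity)⟩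
    rw [Real.sq_sqrt (le_of_lt (by positivity))]
    field_simp
  -- covering set
  set S := {z : ℂ | (starRingEnd ℂ z) ^ 4 = z ^ 2 + ((4:ℝ) : ℂ) * z + ((0:ℝ) : ℂ)} with hS
  have hsub : S ⊆ {((0:ℝ):ℂ) + ((0:ℝ):ℂ)*Complex.I, (r:ℂ) + ((0:ℝ):ℂ)*Complex.I,
      (α:ℂ) + (ya:ℂ)*Complex.I, (α:ℂ) + ((-ya:ℝ):ℂ)*Complex.I,
      (β:ℂ) + (yb:ℂ)*Complex.I, (β:ℂ) + ((-yb:ℝ):ℂ)*Complex.I} := by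
    intro z hz
    obtain ⟨x, y, rfl⟩ := cmk_surj z
    rw [hS, Set.mem_setOf_eq, real_iff] at hz
    obtain ⟨h1, h2⟩ := hz
    simp only [Set.mem_insert_iff, Set.mem_singleton_iff, cmk_inj]
    rcases eq_or_ne y 0 with hy | hy
    · subst hy
      have hx0 : x*(x^3 - x - 4) = 0 := by linear_combination h1
      rcases mul_eq_zero.1 hx0 with hx | hx
      · exact Or.inl ⟨hx, rfl⟩
      · -- x is the cubic root, show x = r
        have hx32 : 3/2 ≤ x := by
          by_contra hcon
          push_neg at hcon
          nlinarith [mul_nonneg (sub_nonneg.2 (le_of_lt hcon)) (sq_nonneg (x+3/4))]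
        have hfac : (x - r)*(x^2 + x*r + r^2 - 1) = 0 := by linear_combination hx - hr3
        have hpos : 0 < x^2 + x*r + r^2 - 1 := by nlinarith
        rcases mul_eq_zero.1 hfac with h | h
        · exact Or.inr (Or.inl ⟨by linarith, rfl⟩)
        · linarith
    · -- branch solutions
      have hU : 2*x*y^2 = 2*x^3+x+2 := by
        have h3 : y*(4*x*y^2 - 4*x^3 - 2*x - 4) = 0 := by linear_combination h2
        rcases mul_eq_zero.1 h3 with h | h
        · exact absurd h hy
        · linarith
      have hxne : x ≠ 0 := by
        rintro rfl
        norm_num at hU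
      have hQ : 16*x^6+8*x^4+32*x^3-3*x^2-8*x-4 = 0 := by
        linear_combination (-4*x^2) * h1 - (12*x^3 - 2*x - 2*x*y^2 - (2*x^3+x+2)) * hU
      -- locate x
      have hxloc : (-6/5 ≤ x ∧ x ≤ -11/10) ∨ (3/5 ≤ x ∧ x ≤ 7/10) := by
        rcases le_or_gt x (-11/10) with hc | hc
        · left
          refine ⟨?_, hc⟩
          by_contra hcon
          push_neg at hcon
          exact absurd hQ (ne_of_gt (Qpos_left x (by linarith)))
        · right
          constructor
          · by_contra hcon
            push_neg at hcon
            exact absurd hQ (ne_of_lt (Qneg_mid x (by linarith) (by linarith)))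
          · by_contra hcon
            push_neg at hcon
            exact absurd hQ (ne_of_gt (Qpos_right x (by linarith)))
      rcases hxloc with ⟨hxa, hxb⟩ | ⟨hxa, hxb⟩
      · -- x = α
        have hxeq : x = α := by
          have hfac : (x - α)*(16*(x^5+x^4*α+x^3*α^2+x^2*α^3+x*α^4+α^5)
              + 8*(x^3+x^2*α+x*α^2+α^3) + 32*(x^2+x*α+α^2) - 3*(x+α) - 8) = 0 := by
            linear_combination hQ - hαQ
          rcases mul_eq_zero.1 hfac with h | h
          · linarith
          · exact absurd h (ne_of_lt (Cneg_alpha x α hxa hxb hα1 hα2))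
        subst hxeq
        have hy2 : y^2 = ya^2 := by
          have : 2*x*(y^2 - ya^2) = 0 := by linear_combination hU - hya
          rcases mul_eq_zero.1 this with h | h
          · exact absurd (by linarith : x = 0) hxne
          · linarith
        rcases sq_eq_of y ya hy2 (le_of_lt hyapos) with h | h
        · exact Or.inr (Or.inr (Or.inl ⟨rfl, h⟩))
        · exact Or.inr (Or.inr (Or.inr (Or.inl ⟨rfl, h⟩)))
      · -- x = β
        have hxeq : x = β := by
          have hfac : (x - β)*(16*(x^5+x^4*β+x^3*β^2+x^2*β^3+x*β^4+β^5)
              + 8*(x^3+x^2*β+x*β^2+β^3) + 32*(x^2+x*β+β^2) - 3*(x+β) - 8) = 0 := by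
            linear_combination hQ - hβQ
          rcases mul_eq_zero.1 hfac with h | h
          · linarith
          · exact absurd h (ne_of_gt (Cpos_beta x β hxa hxb hβ1 hβ2))
        subst hxeq
        have hy2 : y^2 = yb^2 := by
          have : 2*x*(y^2 - yb^2) = 0 := by linear_combination hU - hyb
          rcases mul_eq_zero.1 this with h | h
          · exact absurd (by linarith : x = 0) hxne
          · linarith
        rcases sq_eq_of y yb hy2 (le_of_lt hybpos) with h | h
        · exact Or.inr (Or.inr (Or.inr (Or.inr (Or.inl ⟨rfl, h⟩))))
        · exact Or.inr (Or.inr (Or.inr (Or.inr (Or.inr ⟨rfl, h⟩))))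
  have hTfin : ({((0:ℝ):ℂ) + ((0:ℝ):ℂ)*Complex.I, (r:ℂ) + ((0:ℝ):ℂ)*Complex.I,
      (α:ℂ) + (ya:ℂ)*Complex.I, (α:ℂ) + ((-ya:ℝ):ℂ)*Complex.I,
      (β:ℂ) + (yb:ℂ)*Complex.I, (β:ℂ) + ((-yb:ℝ):ℂ)*Complex.I} : Set ℂ).Finite :=
    (Set.finite_singleton _).insert _ |>.insert _ |>.insert _ |>.insert _ |>.insert _
  have hSfin : S.Finite := hTfin.subset hsub
  -- lower bound: four explicit branch solutions
  have hmem : ∀ x y : ℝ, (16*x^6+8*x^4+32*x^3-3*x^2-8*x-4 = 0) → (2*x*y^2 = 2*x^3+x+2) →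
      x ≠ 0 → ((x:ℂ) + (y:ℂ)*Complex.I) ∈ S := by
    intro x y hQ hU hxne
    rw [hS, Set.mem_setOf_eq, real_iff]
    constructor
    · have h4 : (4*x^2) * ((x^4 - 6*x^2*y^2 + y^4) - (x^2 - y^2 + 4*x + 0)) = 0 := by
        linear_combination (-1) * hQ - (12*x^3 - 2*x - 2*x*y^2 - (2*x^3+x+2)) * hU
      rcases mul_eq_zero.1 h4 with h | h
      · exact absurd h (by positivity)
      · linarith
    · linear_combination (2*y) * hU
  have hαne0 : α ≠ 0 := ne_of_lt hαneg
  have hβne0 : β ≠ 0 := ne_of_gt hβpos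
  have hm1 : ((α:ℂ) + (ya:ℂ)*Complex.I) ∈ S := hmem α ya hαQ hya hαne0
  have hm2 : ((α:ℂ) + ((-ya:ℝ):ℂ)*Complex.I) ∈ S := by
    apply hmem α (-ya) hαQ _ hαne0
    rw [neg_pow]; simpa using hya
  have hm3 : ((β:ℂ) + (yb:ℂ)*Complex.I) ∈ S := hmem β yb hβQ hyb hβne0
  have hm4 : ((β:ℂ) + ((-yb:ℝ):ℂ)*Complex.I) ∈ S := by
    apply hmem β (-yb) hβQ _ hβne0
    rw [neg_pow]; simpa using hyb
  have hLsub : ({(α:ℂ) + (ya:ℂ)*Complex.I, (α:ℂ) + ((-ya:ℝ):ℂ)*Complex.I,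
      (β:ℂ) + (yb:ℂ)*Complex.I, (β:ℂ) + ((-yb:ℝ):ℂ)*Complex.I} : Set ℂ) ⊆ S := by
    intro z hz
    simp only [Set.mem_insert_iff, Set.mem_singleton_iff] at hz
    rcases hz with rfl | rfl | rfl | rfl
    exacts [hm1, hm2, hm3, hm4]
  have hLcard : ({(α:ℂ) + (ya:ℂ)*Complex.I, (α:ℂ) + ((-ya:ℝ):ℂ)*Complex.I,
      (β:ℂ) + (yb:ℂ)*Complex.I, (β:ℂ) + ((-yb:ℝ):ℂ)*Complex.I} : Set ℂ).ncard = 4 := by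
    have hαβ : α ≠ β := by linarith
    apply ncard_four <;> rw [Ne, cmk_inj] <;> rintro ⟨h1, h2⟩
    · exact absurd h2 (by linarith)
    · exact hαβ h1
    · exact hαβ h1
    · exact hαβ h1
    · exact hαβ h1
    · exact absurd h2 (by linarith)
  refine ⟨hSfin, ?_, ?_⟩
  · calc (4:ℕ) = _ := hLcard.symm
      _ ≤ S.ncard := Set.ncard_le_ncard hLsub hSfin
  · calc S.ncard ≤ _ := Set.ncard_le_ncard hsub hTfin
      _ ≤ 6 := ncard_six_le _ _ _ _ _ _

lemma case2 :
    {z : ℂ | (starRingEnd ℂ z) ^ 4 = z ^ 2 + ((0:ℝ) : ℂ) * z + ((-4:ℝ) : ℂ)}.Finite ∧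
    4 ≤ {z : ℂ | (starRingEnd ℂ z) ^ 4 = z ^ 2 + ((0:ℝ) : ℂ) * z + ((-4:ℝ) : ℂ)}.ncard ∧
    {z : ℂ | (starRingEnd ℂ z) ^ 4 = z ^ 2 + ((0:ℝ) : ℂ) * z + ((-4:ℝ) : ℂ)}.ncard ≤ 6 := by
  obtain ⟨t, ht2, ht0⟩ : ∃ t : ℝ, t^2 = 5 ∧ 2 ≤ t := by
    refine ⟨Real.sqrt 5, Real.sq_sqrt (by norm_num), ?_⟩
    nlinarith [Real.sq_sqrt (show (0:ℝ) ≤ 5 by norm_num), Real.sqrt_nonneg 5]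
  obtain ⟨x0, hx0sq, hx0pos⟩ : ∃ x0 : ℝ, x0^2 = (2*t-1)/4 ∧ 0 < x0 :=
    ⟨Real.sqrt ((2*t-1)/4), Real.sq_sqrt (by nlinarith), Real.sqrt_pos.2 (by nlinarith)⟩
  obtain ⟨y0, hy0sq, hy0pos⟩ : ∃ y0 : ℝ, y0^2 = (2*t+1)/4 ∧ 0 < y0 :=
    ⟨Real.sqrt ((2*t+1)/4), Real.sq_sqrt (by nlinarith), Real.sqrt_pos.2 (by nlinarith)⟩
  have hset : {z : ℂ | (starRingEnd ℂ z) ^ 4 = z ^ 2 + ((0:ℝ) : ℂ) * z + ((-4:ℝ) : ℂ)} =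
      {(x0:ℂ) + (y0:ℂ)*Complex.I, (x0:ℂ) + ((-y0:ℝ):ℂ)*Complex.I,
       ((-x0:ℝ):ℂ) + (y0:ℂ)*Complex.I, ((-x0:ℝ):ℂ) + ((-y0:ℝ):ℂ)*Complex.I} := by
    ext z
    obtain ⟨x, y, rfl⟩ := cmk_surj z
    rw [Set.mem_setOf_eq, real_iff]
    simp only [Set.mem_insert_iff, Set.mem_singleton_iff, cmk_inj]
    constructor
    · rintro ⟨h1, h2⟩
      rcases eq_or_ne x 0 with hx | hx
      · exfalso; rw [hx] at h1; nlinarith [sq_nonneg (y^2), sq_nonneg y]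
      rcases eq_or_ne y 0 with hy | hy
      · exfalso; rw [hy] at h1; nlinarith [sq_nonneg (2*x^2 - 1)]
      have hb : 2*y^2 = 2*x^2 + 1 := by
        have h3 : (2*x*y) * (2*(y^2 - x^2) - 1) = 0 := by linear_combination h2
        rcases mul_eq_zero.1 h3 with h | h
        · exact absurd h (mul_ne_zero (mul_ne_zero two_ne_zero hx) hy)
        · linarith
      have hxx : x^2 = x0^2 := by
        rw [hx0sq]
        have h5 : (4*x^2 + 1 - 2*t)*(4*x^2 + 1 + 2*t) = 0 := by nlinarith [h1, hb, ht2]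
        rcases mul_eq_zero.1 h5 with h | h
        · linarith
        · nlinarith [sq_nonneg x]
      have hyy : y^2 = y0^2 := by rw [hy0sq]; rw [hx0sq] at hxx; linarith
      rcases sq_eq_of x x0 hxx hx0pos.le with h | h <;>
        rcases sq_eq_of y y0 hyy hy0pos.le with h' | h' <;> tauto
    · have key : ∀ u v : ℝ, u^2 = (2*t-1)/4 → v^2 = (2*t+1)/4 →
          (u^4 - 6*u^2*v^2 + v^4 = u^2 - v^2 + 0*u + (-4) ∧
           4*u*v*(v^2 - u^2) = 2*u*v + 0*v) := by
        intro u v hu hv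
        constructor
        · linear_combination (u^2 + (2*t-1)/4 - 6*v^2 - 1) * hu
            + (v^2 + (2*t+1)/4 - 6*(2*t-1)/4 + 1) * hv - ht2
        · linear_combination (4*u*v) * hv - (4*u*v) * hu
      rintro (⟨h1, h2⟩ | ⟨h1, h2⟩ | ⟨h1, h2⟩ | ⟨h1, h2⟩) <;> rw [h1, h2] <;>
        [exact key x0 y0 hx0sq hy0sq;
         exact key x0 (-y0) hx0sq (by rw [neg_sq]; exact hy0sq);
         exact key (-x0) y0 (by rw [neg_sq]; exact hx0sq) hy0sq;
         exact key (-x0) (-y0) (by rw [neg_sq]; exact hx0sq) (by rw [neg_sq]; exact hy0sq)]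
  rw [hset]
  have key_ne : ∀ u v u' v' : ℝ, (u ≠ u' ∨ v ≠ v') →
      (u:ℂ) + (v:ℂ)*Complex.I ≠ (u':ℂ) + (v':ℂ)*Complex.I := by
    intro u v u' v' h he
    rcases (cmk_inj u v u' v').1 he with ⟨h1, h2⟩
    tauto
  have hcard : ({(x0:ℂ) + (y0:ℂ)*Complex.I, (x0:ℂ) + ((-y0:ℝ):ℂ)*Complex.I,
       ((-x0:ℝ):ℂ) + (y0:ℂ)*Complex.I, ((-x0:ℝ):ℂ) + ((-y0:ℝ):ℂ)*Complex.I} : Set ℂ).ncard = 4 := by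
    apply ncard_four <;> apply key_ne <;>
      [right; left; left; left; left; right] <;> intro h <;> nlinarith
  refine ⟨?_, by rw [hcard], by rw [hcard]; norm_num⟩
  exact (Set.finite_singleton _).insert _ |>.insert _ |>.insert _

lemma case4 :
    {z : ℂ | (starRingEnd ℂ z) ^ 4 = z ^ 2 + ((0:ℝ) : ℂ) * z + ((4:ℝ) : ℂ)}.Finite ∧
    4 ≤ {z : ℂ | (starRingEnd ℂ z) ^ 4 = z ^ 2 + ((0:ℝ) : ℂ) * z + ((4:ℝ) : ℂ)}.ncard ∧
    {z : ℂ | (starRingEnd ℂ z) ^ 4 = z ^ 2 + ((0:ℝ) : ℂ) * z + ((4:ℝ) : ℂ)}.ncard ≤ 6 := by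
  obtain ⟨u, hu2, hu0⟩ : ∃ u : ℝ, u^2 = 17 ∧ 4 ≤ u := by
    refine ⟨Real.sqrt 17, Real.sq_sqrt (by norm_num), ?_⟩
    nlinarith [Real.sq_sqrt (show (0:ℝ) ≤ 17 by norm_num), Real.sqrt_nonneg 17]
  obtain ⟨c, hcsq, hcpos⟩ : ∃ c : ℝ, c^2 = (1+u)/2 ∧ 0 < c :=
    ⟨Real.sqrt ((1+u)/2), Real.sq_sqrt (by nlinarith), Real.sqrt_pos.2 (by nlinarith)⟩
  obtain ⟨d, hdsq, hdpos⟩ : ∃ d : ℝ, d^2 = (u-1)/2 ∧ 0 < d :=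
    ⟨Real.sqrt ((u-1)/2), Real.sq_sqrt (by nlinarith), Real.sqrt_pos.2 (by nlinarith)⟩
  have hset : {z : ℂ | (starRingEnd ℂ z) ^ 4 = z ^ 2 + ((0:ℝ) : ℂ) * z + ((4:ℝ) : ℂ)} =
      {(c:ℂ) + ((0:ℝ):ℂ)*Complex.I, ((-c:ℝ):ℂ) + ((0:ℝ):ℂ)*Complex.I,
       ((0:ℝ):ℂ) + (d:ℂ)*Complex.I, ((0:ℝ):ℂ) + ((-d:ℝ):ℂ)*Complex.I} := by
    ext z
    obtain ⟨x, y, rfl⟩ := cmk_surj z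
    rw [Set.mem_setOf_eq, real_iff]
    simp only [Set.mem_insert_iff, Set.mem_singleton_iff, cmk_inj]
    constructor
    · rintro ⟨h1, h2⟩
      have h3 : (2*x*y) * (2*(y^2 - x^2) - 1) = 0 := by linear_combination h2
      rcases mul_eq_zero.1 h3 with h | h
      · rcases mul_eq_zero.1 h with h' | hy
        · have hx : x = 0 := by
            rcases mul_eq_zero.1 h' with h'' | h''
            · norm_num at h''
            · exact h''
          -- x = 0 : y^4 = -y^2 + 4, so 2y^2+1 = u
          rw [hx] at h1
          have hyy : y^2 = d^2 := by
            rw [hdsq]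
            have h5 : (2*y^2 + 1 - u)*(2*y^2 + 1 + u) = 0 := by nlinarith [h1, hu2]
            rcases mul_eq_zero.1 h5 with h6 | h6
            · linarith
            · nlinarith [sq_nonneg y]
          rcases sq_eq_of y d hyy hdpos.le with h6 | h6 <;> tauto
        · -- y = 0 : x^4 = x^2 + 4, so 2x^2-1 = u
          rw [hy] at h1
          have hxx : x^2 = c^2 := by
            rw [hcsq]
            have h5 : (2*x^2 - 1 - u)*(2*x^2 - 1 + u) = 0 := by nlinarith [h1, hu2]
            rcases mul_eq_zero.1 h5 with h6 | h6
            · linarith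
            · nlinarith [sq_nonneg x]
          rcases sq_eq_of x c hxx hcpos.le with h6 | h6 <;> tauto
      · -- branch 2(y^2-x^2)=1 : impossible
        exfalso
        have hb : 2*y^2 = 2*x^2 + 1 := by linarith
        nlinarith [h1, hb, sq_nonneg x, sq_nonneg (x^2)]
    · have key1 : ∀ s : ℝ, s^2 = (1+u)/2 →
          (s^4 - 6*s^2*0^2 + 0^4 = s^2 - 0^2 + 0*s + 4 ∧
           4*s*0*(0^2 - s^2) = 2*s*0 + 0*0) := by
        intro s hs
        constructor
        · linear_combination (s^2 + (1+u)/2 - 1) * hs + (1/4) * hu2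
        · ring
      have key2 : ∀ s : ℝ, s^2 = (u-1)/2 →
          (0^4 - 6*0^2*s^2 + s^4 = 0^2 - s^2 + 0*0 + 4 ∧
           4*0*s*(s^2 - 0^2) = 2*0*s + 0*s) := by
        intro s hs
        constructor
        · linear_combination (s^2 + (u-1)/2 + 1) * hs + (1/4) * hu2
        · ring
      rintro (⟨h1, h2⟩ | ⟨h1, h2⟩ | ⟨h1, h2⟩ | ⟨h1, h2⟩) <;> rw [h1, h2] <;>
        [exact key1 c hcsq;
         exact key1 (-c) (by rw [neg_sq]; exact hcsq);
         exact key2 d hdsq;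
         exact key2 (-d) (by rw [neg_sq]; exact hdsq)]
  rw [hset]
  have hcard : ({(c:ℂ) + ((0:ℝ):ℂ)*Complex.I, ((-c:ℝ):ℂ) + ((0:ℝ):ℂ)*Complex.I,
       ((0:ℝ):ℂ) + (d:ℂ)*Complex.I, ((0:ℝ):ℂ) + ((-d:ℝ):ℂ)*Complex.I} : Set ℂ).ncard = 4 := by
    apply ncard_four <;> rw [Ne, cmk_inj] <;> rintro ⟨h1, h2⟩
    · exact absurd h1 (by intro h; nlinarith)
    · exact absurd h1 (by intro h; nlinarith)
    · exact absurd h1 (by intro h; nlinarith)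
    · exact absurd h1 (by intro h; nlinarith)
    · exact absurd h1 (by intro h; nlinarith)
    · exact absurd h2 (by intro h; nlinarith)
  refine ⟨?_, by rw [hcard], by rw [hcard]; norm_num⟩
  exact (Set.finite_singleton _).insert _ |>.insert _ |>.insert _

lemma case3 :
    {z : ℂ | (starRingEnd ℂ z) ^ 4 = z ^ 2 + ((-4:ℝ) : ℂ) * z + ((0:ℝ) : ℂ)}.Finite ∧
    4 ≤ {z : ℂ | (starRingEnd ℂ z) ^ 4 = z ^ 2 + ((-4:ℝ) : ℂ) * z + ((0:ℝ) : ℂ)}.ncard ∧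
    {z : ℂ | (starRingEnd ℂ z) ^ 4 = z ^ 2 + ((-4:ℝ) : ℂ) * z + ((0:ℝ) : ℂ)}.ncard ≤ 6 := by
  have himg : {z : ℂ | (starRingEnd ℂ z) ^ 4 = z ^ 2 + ((-4:ℝ) : ℂ) * z + ((0:ℝ) : ℂ)} =
      (fun w => -w) '' {z : ℂ | (starRingEnd ℂ z) ^ 4 = z ^ 2 + ((4:ℝ) : ℂ) * z + ((0:ℝ) : ℂ)} := by
    ext z
    simp only [Set.mem_image, Set.mem_setOf_eq]
    constructor
    · intro h
      refine ⟨-z, ?_, by ring⟩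
      rw [map_neg]
      push_cast at h ⊢
      linear_combination h
    · rintro ⟨w, hw, rfl⟩
      rw [map_neg]
      push_cast at hw ⊢
      linear_combination hw
  obtain ⟨hf, h4, h6⟩ := case1
  rw [himg, Set.ncard_image_of_injective _ neg_injective]
  exact ⟨hf.image _, h4, h6⟩

/-- for each of the representative parameter choices
`(a, b) ∈ {(4,0), (0,-4), (-4,0), (0,4)}` (one in each unbounded connected
component of the complement of the discriminantal curve), the solution set of
`conj z ^ 4 = z ^ 2 + a z + b` is finite with between 4 and 6 elements. -/
theorem stmt_9 :
    ∀ a b : ℝ, (a, b) ∈ ({(4, 0), (0, -4), (-4, 0), (0, 4)} : Set (ℝ × ℝ)) →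
      {z : ℂ | (starRingEnd ℂ z) ^ 4 = z ^ 2 + (a : ℂ) * z + (b : ℂ)}.Finite ∧
      4 ≤ {z : ℂ | (starRingEnd ℂ z) ^ 4 = z ^ 2 + (a : ℂ) * z + (b : ℂ)}.ncard ∧
      {z : ℂ | (starRingEnd ℂ z) ^ 4 = z ^ 2 + (a : ℂ) * z + (b : ℂ)}.ncard ≤ 6 := by
  intro a b hab
  simp only [Set.mem_insert_iff, Set.mem_singleton_iff, Prod.mk.injEq] at hab
  rcases hab with ⟨ha, hb⟩ | ⟨ha, hb⟩ | ⟨ha, hb⟩ | ⟨ha, hb⟩ <;> subst ha <;> subst hb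
  · exact case1
  · exact case2
  · exact case3
  · exact case4
end
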